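/- arXiv:1709.10455 — 5 statements merged into one kernel-verified Lean document; each statement's English description precedes it below -/
import Mathlib

section
/- Let q > 1 be a real number and let ι be a finite nonempty index set of machine groups, where group i has a positive real weight w i > 0 (its number of machines) and a speed s i > 0, and the speeds are pairwise distinct (s is injective). Let μ be a real number with 0 < μ ≤ 1, and let ψ, ξ : ι → ℝ be load profiles with ψ i ≥ 0 and ξ i ≥ 0 for all i. Assume: (1) for every i ∈ ι, ∑_{j : s j ≥ s i} ψ j * w j * s j ≥ ∑_{j : s j ≥ s i} ξ j * w j * s j (every prefix of groups in decreasing order of speeds carries at least as much volume under ψ as under ξ); and (2) for every pair i, j ∈ ι, (ξ i)^(q-1) / s i ≥ μ * (ξ j)^(q-1) / s j. Then ∑_i w i * (ψ i)^q ≥ μ^(q/(q-1)) * ∑_i w i * (ξ i)^q. -/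
open Finset

theorem load_profile_comparison {ι : Type*} [Fintype ι] [Nonempty ι]
    (q : ℝ) (hq : 1 < q)
    (w s : ι → ℝ) (hw : ∀ i, 0 < w i) (hs : ∀ i, 0 < s i)
    (hs_inj : Function.Injective s)
    (μ : ℝ) (hμ0 : 0 < μ) (hμ1 : μ ≤ 1)
    (ψ ξ : ι → ℝ) (hψ : ∀ i, 0 ≤ ψ i) (hξ : ∀ i, 0 ≤ ξ i)
    (h1 : ∀ i : ι, ∑ j ∈ univ.filter (fun j => s i ≤ s j), ψ j * w j * s j ≥
        ∑ j ∈ univ.filter (fun j => s i ≤ s j), ξ j * w j * s j)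
    (h2 : ∀ i j : ι, ξ i ^ (q - 1) / s i ≥ μ * (ξ j ^ (q - 1) / s j)) :
    ∑ i, w i * ψ i ^ q ≥ μ ^ (q / (q - 1)) * ∑ i, w i * ξ i ^ q := by
  have hq0 : (0:ℝ) < q := lt_trans one_pos hq
  have hq1 : (0:ℝ) < q - 1 := by linarith
  -- trivial case: ξ ≡ 0
  by_cases hE : ∀ i, ξ i = 0
  · have hz : ∑ i, w i * ξ i ^ q = 0 := by
      apply Finset.sum_eq_zero; intro i _
      rw [hE i, Real.zero_rpow (ne_of_gt hq0), mul_zero]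
    rw [hz, mul_zero]
    exact Finset.sum_nonneg fun i _ => mul_nonneg (hw i).le (Real.rpow_nonneg (hψ i) q)
  push_neg at hE
  obtain ⟨j0, hj0⟩ := hE
  have hj0' : 0 < ξ j0 := lt_of_le_of_ne (hξ j0) (Ne.symm hj0)
  -- all ξ i are positive
  have hξpos : ∀ i, 0 < ξ i := by
    intro i
    rcases lt_or_eq_of_le (hξ i) with h | h
    · exact h
    · exfalso
      have := h2 i j0
      rw [← h, Real.zero_rpow (ne_of_gt hq1)] at this
      have hpos : 0 < μ * (ξ j0 ^ (q - 1) / s j0) :=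
        mul_pos hμ0 (div_pos (Real.rpow_pos_of_pos hj0' _) (hs j0))
      simp only [zero_div] at this
      linarith
  -- g i = ξ i ^ (q-1) / s i ; G its maximum
  set g : ι → ℝ := fun i => ξ i ^ (q - 1) / s i with hg
  have hgpos : ∀ i, 0 < g i := fun i =>
    div_pos (Real.rpow_pos_of_pos (hξpos i) _) (hs i)
  obtain ⟨jm, -, hjm⟩ := Finset.exists_max_image (univ : Finset ι) g univ_nonempty
  set G : ℝ := g jm with hG
  have hGpos : 0 < G := hgpos jm
  have hgub : ∀ i, g i ≤ G := fun i => hjm i (mem_univ i)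
  have hglb : ∀ i, μ * G ≤ g i := fun i => h2 i jm
  -- scaling factors
  set t : ι → ℝ := fun i => (μ * G / g i) ^ ((1:ℝ) / (q - 1)) with ht
  have hbase_pos : ∀ i, 0 < μ * G / g i := fun i =>
    div_pos (mul_pos hμ0 hGpos) (hgpos i)
  have hbase_le_one : ∀ i, μ * G / g i ≤ 1 := fun i =>
    (div_le_one (hgpos i)).mpr (hglb i)
  have hbase_ge : ∀ i, μ ≤ μ * G / g i := fun i => by
    rw [le_div_iff₀ (hgpos i)]
    exact mul_le_mul_of_nonneg_left (hgub i) hμ0.le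
  have htpos : ∀ i, 0 < t i := fun i => Real.rpow_pos_of_pos (hbase_pos i) _
  have ht_le_one : ∀ i, t i ≤ 1 := fun i =>
    Real.rpow_le_one (hbase_pos i).le (hbase_le_one i) (by positivity)
  have ht_pow1 : ∀ i, t i ^ (q - 1) = μ * G / g i := by
    intro i
    rw [ht, ← Real.rpow_mul (hbase_pos i).le, one_div,
      inv_mul_cancel₀ (ne_of_gt hq1), Real.rpow_one]
  have ht_powq : ∀ i, μ ^ (q / (q - 1)) ≤ t i ^ q := by
    intro i
    rw [ht, ← Real.rpow_mul (hbase_pos i).le, one_div, inv_mul_eq_div]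
    exact Real.rpow_le_rpow hμ0.le (hbase_ge i) (by positivity)
  -- comparison point y i = t i * ξ i
  set y : ι → ℝ := fun i => t i * ξ i with hy
  have hypos : ∀ i, 0 < y i := fun i => mul_pos (htpos i) (hξpos i)
  -- per-index convexity bound: ψ i ^ q ≥ y i ^ q + q * y i ^ (q-1) * (ψ i - y i)
  have hconv : ∀ i, y i ^ q + q * (y i ^ (q - 1) * (ψ i - y i)) ≤ ψ i ^ q := by
    intro i
    have hs1 : (-1:ℝ) ≤ ψ i / y i - 1 := by
      have : 0 ≤ ψ i / y i := div_nonneg (hψ i) (hypos i).le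
      linarith
    have hb := one_add_mul_self_le_rpow_one_add hs1 hq.le
    have h1add : (1:ℝ) + (ψ i / y i - 1) = ψ i / y i := by ring
    rw [h1add, Real.div_rpow (hψ i) (hypos i).le] at hb
    have hb' := mul_le_mul_of_nonneg_right hb (Real.rpow_pos_of_pos (hypos i) q).le
    rw [div_mul_cancel₀ _ (ne_of_gt (Real.rpow_pos_of_pos (hypos i) q))] at hb'
    have hyq : y i ^ q = y i ^ (q - 1) * y i := by
      rw [Real.rpow_sub (hypos i), Real.rpow_one, div_mul_cancel₀]
      exact ne_of_gt (hypos i)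
    calc y i ^ q + q * (y i ^ (q - 1) * (ψ i - y i))
        = (1 + q * (ψ i / y i - 1)) * y i ^ q := by
          have hyne : y i ≠ 0 := ne_of_gt (hypos i)
          rw [hyq]
          field_simp
      _ ≤ ψ i ^ q := hb'
  -- key identity: y i ^ (q-1) = μ * G * s i
  have hykey : ∀ i, y i ^ (q - 1) = μ * G * s i := by
    intro i
    rw [hy]
    simp only
    have hne : ξ i ^ (q - 1) ≠ 0 := ne_of_gt (Real.rpow_pos_of_pos (hξpos i) _)
    rw [Real.mul_rpow (htpos i).le (hξpos i).le, ht_pow1 i,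
      show g i = ξ i ^ (q - 1) / s i from rfl, div_div_eq_mul_div,
      div_mul_cancel₀ _ hne]
  -- full volume inequality from h1 at the slowest machine
  obtain ⟨i0, -, hi0⟩ := Finset.exists_min_image (univ : Finset ι) s univ_nonempty
  have hfull : ∑ i, ξ i * w i * s i ≤ ∑ i, ψ i * w i * s i := by
    have := h1 i0
    have hfilter : univ.filter (fun j => s i0 ≤ s j) = univ := by
      apply Finset.filter_true_of_mem
      intro j _
      exact hi0 j (mem_univ j)
    rw [hfilter] at this
    exact this
  -- volume of y is at most volume of ξ
  have hyvol : ∑ i, y i * w i * s i ≤ ∑ i, ξ i * w i * s i := by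
    apply Finset.sum_le_sum
    intro i _
    have : y i ≤ ξ i := by
      rw [hy]
      simp only
      nth_rewrite 2 [← one_mul (ξ i)]
      exact mul_le_mul_of_nonneg_right (ht_le_one i) (hξ i)
    exact mul_le_mul_of_nonneg_right (mul_le_mul_of_nonneg_right this (hw i).le) (hs i).le
  -- assemble
  have step1 : ∑ i, (w i * y i ^ q + q * (μ * G) * (ψ i * w i * s i - y i * w i * s i))
      ≤ ∑ i, w i * ψ i ^ q := by
    apply Finset.sum_le_sum
    intro i _
    have := mul_le_mul_of_nonneg_left (hconv i) (hw i).le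
    calc w i * y i ^ q + q * (μ * G) * (ψ i * w i * s i - y i * w i * s i)
        = w i * (y i ^ q + q * (y i ^ (q - 1) * (ψ i - y i))) := by
          rw [hykey i]; ring
      _ ≤ w i * ψ i ^ q := this
  have step2 : μ ^ (q / (q - 1)) * ∑ i, w i * ξ i ^ q ≤ ∑ i, w i * y i ^ q := by
    rw [Finset.mul_sum]
    apply Finset.sum_le_sum
    intro i _
    have hyq : y i ^ q = t i ^ q * ξ i ^ q := by
      rw [hy]; exact Real.mul_rpow (htpos i).le (hξpos i).le
    rw [hyq]
    calc μ ^ (q / (q - 1)) * (w i * ξ i ^ q)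
        ≤ t i ^ q * (w i * ξ i ^ q) := by
          apply mul_le_mul_of_nonneg_right (ht_powq i)
          exact mul_nonneg (hw i).le (Real.rpow_nonneg (hξ i) q)
      _ = w i * (t i ^ q * ξ i ^ q) := by ring
  have hlin : 0 ≤ q * (μ * G) * (∑ i, ψ i * w i * s i - ∑ i, y i * w i * s i) := by
    apply mul_nonneg
    · positivity
    · linarith [hfull, hyvol]
  calc μ ^ (q / (q - 1)) * ∑ i, w i * ξ i ^ q
      ≤ ∑ i, w i * y i ^ q := step2
    _ ≤ ∑ i, w i * y i ^ q + q * (μ * G) * (∑ i, ψ i * w i * s i - ∑ i, y i * w i * s i) := by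
        linarith
    _ = ∑ i, (w i * y i ^ q + q * (μ * G) * (ψ i * w i * s i - y i * w i * s i)) := by
        rw [Finset.sum_add_distrib, ← Finset.mul_sum, Finset.sum_sub_distrib]
    _ ≤ ∑ i, w i * ψ i ^ q := step1
end

section
/- Let q > 1 be a real number and let ι be a finite nonempty index set of machine groups, where group i has weight w i > 0 and speed s i > 0, and the speeds are pairwise distinct. Let ψ, ξ : ι → ℝ be load profiles with ψ i ≥ 0 and ξ i ≥ 0 for all i. Assume: (1) for every i ∈ ι, ∑_{j : s j ≥ s i} ψ j * w j * s j ≥ ∑_{j : s j ≥ s i} ξ j * w j * s j; and (2) the quantity (ξ i)^(q-1) / s i is monotone in speed: for all i, j with s i ≥ s j, (ξ i)^(q-1) / s i ≥ (ξ j)^(q-1) / s j. Then ∑_i w i * (ψ i)^q ≥ ∑_i w i * (ξ i)^q. -/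
open Finset

private lemma tangent_rpow (q x y : ℝ) (hq : 1 < q) (hx : 0 ≤ x) (hy : 0 ≤ y) :
    y ^ q + q * y ^ (q - 1) * (x - y) ≤ x ^ q := by
  rcases eq_or_lt_of_le hy with h | h
  · rw [← h, Real.zero_rpow (by linarith : q ≠ 0),
      Real.zero_rpow (by intro hh; linarith [hh] : q - 1 ≠ 0)]
    simpa using Real.rpow_nonneg hx q
  · have hz : -1 ≤ x / y - 1 := by
      have : 0 ≤ x / y := div_nonneg hx hy
      linarith
    have hb := one_add_mul_self_le_rpow_one_add hz hq.le
    have h1y : (1 : ℝ) + (x / y - 1) = x / y := by ring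
    rw [h1y] at hb
    have hyq : 0 < y ^ q := Real.rpow_pos_of_pos h q
    have hdiv : (x / y) ^ q = x ^ q / y ^ q := Real.div_rpow hx hy q
    rw [hdiv] at hb
    have hb2 : (1 + q * (x / y - 1)) * y ^ q ≤ x ^ q := (le_div_iff₀ hyq).mp hb
    have key : (1 + q * (x / y - 1)) * y ^ q = y ^ q + q * y ^ (q - 1) * (x - y) := by
      have hy1 : y ^ (q - 1) = y ^ q / y := by
        rw [Real.rpow_sub h, Real.rpow_one]
      rw [hy1]; field_simp
    linarith [key ▸ hb2]

private lemma abel_nonneg {ι : Type*} (s : ι → ℝ) (hs_inj : Function.Injective s)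
    (T : Finset ι) : ∀ c a : ι → ℝ, (∀ i ∈ T, 0 ≤ c i) →
    (∀ i ∈ T, ∀ j ∈ T, s j ≤ s i → c j ≤ c i) →
    (∀ i ∈ T, 0 ≤ ∑ j ∈ T.filter (fun j => s i ≤ s j), a j) →
    0 ≤ ∑ i ∈ T, c i * a i := by
  classical
  induction T using Finset.strongInductionOn with
  | _ T ih =>
    intro c a hc hmono hpre
    rcases T.eq_empty_or_nonempty with rfl | hne
    · simp
    obtain ⟨i0, hi0, hmin⟩ := T.exists_min_image s hne
    have hfull : T.filter (fun j => s i0 ≤ s j) = T := by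
      apply Finset.filter_true_of_mem
      intro j hj; exact hmin j hj
    have hsum : 0 ≤ ∑ i ∈ T, a i := by
      have := hpre i0 hi0; rwa [hfull] at this
    have hsplit : ∑ i ∈ T, c i * a i
        = ∑ i ∈ T, (c i - c i0) * a i + c i0 * ∑ i ∈ T, a i := by
      rw [Finset.mul_sum, ← Finset.sum_add_distrib]
      apply Finset.sum_congr rfl; intro i _; ring
    rw [hsplit]
    have h2 : 0 ≤ ∑ i ∈ T, (c i - c i0) * a i := by
      have hz0 : (c i0 - c i0) * a i0 = 0 := by ring
      have hre : ∑ i ∈ T, (c i - c i0) * a i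
          = ∑ i ∈ T.erase i0, (c i - c i0) * a i :=
        (Finset.sum_erase T hz0).symm
      rw [hre]
      apply ih (T.erase i0) (Finset.erase_ssubset hi0) (fun i => c i - c i0) a
      · intro i hi
        have hiT := Finset.mem_of_mem_erase hi
        have := hmono i hiT i0 hi0 (hmin i hiT)
        linarith
      · intro i hi j hj hsij
        have := hmono i (Finset.mem_of_mem_erase hi) j (Finset.mem_of_mem_erase hj) hsij
        linarith
      · intro i hi
        have hiT := Finset.mem_of_mem_erase hi
        have hlt : s i0 < s i := by
          rcases lt_or_eq_of_le (hmin i hiT) with h | h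
          · exact h
          · exact absurd (hs_inj h.symm) (Finset.ne_of_mem_erase hi)
        have hfe : (T.erase i0).filter (fun j => s i ≤ s j)
            = T.filter (fun j => s i ≤ s j) := by
          ext j
          simp only [Finset.mem_filter, Finset.mem_erase]
          constructor
          · rintro ⟨⟨_, hj⟩, hh⟩; exact ⟨hj, hh⟩
          · rintro ⟨hj, hh⟩
            refine ⟨⟨?_, hj⟩, hh⟩
            rintro rfl; linarith
        rw [hfe]; exact hpre i hiT
    have h3 : 0 ≤ c i0 * ∑ i ∈ T, a i := mul_nonneg (hc i0 hi0) hsum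
    linarith

theorem load_profile_comparison_mu_one {ι : Type*} [Fintype ι] [Nonempty ι]
    (q : ℝ) (hq : 1 < q)
    (w s : ι → ℝ) (hw : ∀ i, 0 < w i) (hs : ∀ i, 0 < s i)
    (hs_inj : Function.Injective s)
    (ψ ξ : ι → ℝ) (hψ : ∀ i, 0 ≤ ψ i) (hξ : ∀ i, 0 ≤ ξ i)
    (h1 : ∀ i : ι, ∑ j ∈ univ.filter (fun j => s i ≤ s j), ψ j * w j * s j ≥
        ∑ j ∈ univ.filter (fun j => s i ≤ s j), ξ j * w j * s j)
    (h2 : ∀ i j : ι, s j ≤ s i → ξ i ^ (q - 1) / s i ≥ ξ j ^ (q - 1) / s j) :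
    ∑ i, w i * ψ i ^ q ≥ ∑ i, w i * ξ i ^ q := by
  classical
  set c : ι → ℝ := fun i => ξ i ^ (q - 1) / s i with hc_def
  set a : ι → ℝ := fun i => (ψ i - ξ i) * w i * s i with ha_def
  have habel : 0 ≤ ∑ i, c i * a i := by
    apply abel_nonneg s hs_inj univ c a
    · intro i _
      exact div_nonneg (Real.rpow_nonneg (hξ i) _) (hs i).le
    · intro i _ j _ hsij
      exact h2 i j hsij
    · intro i _
      have := h1 i
      have : 0 ≤ ∑ j ∈ univ.filter (fun j => s i ≤ s j),
          (ψ j * w j * s j - ξ j * w j * s j) := by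
        rw [Finset.sum_sub_distrib]; linarith
      calc (0:ℝ) ≤ _ := this
        _ = ∑ j ∈ univ.filter (fun j => s i ≤ s j), a j := by
          apply Finset.sum_congr rfl; intro j _; simp only [ha_def]; ring
  have hkey : ∀ i, w i * ξ i ^ q + q * (c i * a i) ≤ w i * ψ i ^ q := by
    intro i
    have ht := tangent_rpow q (ψ i) (ξ i) hq (hψ i) (hξ i)
    have hca : c i * a i = ξ i ^ (q - 1) * (ψ i - ξ i) * w i := by
      have hsne : s i ≠ 0 := (hs i).ne'
      have : c i * a i = ξ i ^ (q - 1) * (ψ i - ξ i) * w i * (s i / s i) := by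
        simp only [hc_def, ha_def]; ring
      rw [div_self hsne, mul_one] at this
      exact this
    rw [hca]
    have hwi := (hw i).le
    nlinarith [mul_le_mul_of_nonneg_left ht hwi]
  have hsum : ∑ i, (w i * ξ i ^ q + q * (c i * a i)) ≤ ∑ i, w i * ψ i ^ q :=
    Finset.sum_le_sum fun i _ => hkey i
  rw [Finset.sum_add_distrib] at hsum
  have : 0 ≤ q * ∑ i, c i * a i := mul_nonneg (by linarith) habel
  rw [Finset.mul_sum] at this
  simp only [ge_iff_le]
  linarith [hsum, this]
end

section
/- Let q > 1 be a real number, ι a finite nonempty index set of machine groups with speeds s i > 0, and let μ be a real number with 0 < μ ≤ 1. Let ξ : ι → ℝ be a load profile with ξ i ≥ 0 for all i, satisfying: for every pair i, j ∈ ι, (ξ i)^(q-1) / s i ≥ μ * (ξ j)^(q-1) / s j. Define χ : ι → ℝ by χ i = (s i * min_{j : s j ≥ s i} ((ξ j)^(q-1) / s j))^(1/(q-1)), where the minimum is over all groups at least as fast as i. Then for every i ∈ ι: (a) χ i ≤ ξ i; (b) χ i ≥ μ^(1/(q-1)) * ξ i; and (c) the ratios of χ are monotone in speed: for all i, j with s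 i ≥ s j, (χ i)^(q-1) / s i ≥ (χ j)^(q-1) / s j. -/
open Finset

theorem transformed_profile_properties {ι : Type*} [Fintype ι] [Nonempty ι]
    (q : ℝ) (hq : 1 < q)
    (s : ι → ℝ) (hs : ∀ i, 0 < s i)
    (μ : ℝ) (hμ0 : 0 < μ) (hμ1 : μ ≤ 1)
    (ξ : ι → ℝ) (hξ : ∀ i, 0 ≤ ξ i)
    (h2 : ∀ i j : ι, ξ i ^ (q - 1) / s i ≥ μ * (ξ j ^ (q - 1) / s j))
    (χ : ι → ℝ)
    (hχ : ∀ i, χ i = (s i * (univ.filter (fun j => s i ≤ s j)).inf'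
        ⟨i, Finset.mem_filter.mpr ⟨Finset.mem_univ i, le_refl _⟩⟩
        (fun j => ξ j ^ (q - 1) / s j)) ^ (1 / (q - 1))) :
    (∀ i, χ i ≤ ξ i) ∧
    (∀ i, χ i ≥ μ ^ (1 / (q - 1)) * ξ i) ∧
    (∀ i j, s j ≤ s i → χ i ^ (q - 1) / s i ≥ χ j ^ (q - 1) / s j) := by
  have hq1 : (0:ℝ) < q - 1 := by linarith
  have hne : q - 1 ≠ 0 := ne_of_gt hq1
  have he0 : 0 ≤ 1 / (q - 1) := by positivity
  set f : ι → ℝ := fun j => ξ j ^ (q - 1) / s j with hfdef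
  set m : ι → ℝ := fun i => (univ.filter (fun j => s i ≤ s j)).inf'
      ⟨i, Finset.mem_filter.mpr ⟨Finset.mem_univ i, le_refl _⟩⟩ f with hmdef
  have hf0 : ∀ j, 0 ≤ f j := fun j =>
    div_nonneg (Real.rpow_nonneg (hξ j) _) (hs j).le
  have hm0 : ∀ i, 0 ≤ m i := by
    intro i
    apply Finset.le_inf'
    intro j _
    exact hf0 j
  have hmle : ∀ i, m i ≤ f i := by
    intro i
    exact Finset.inf'_le f (by simp)
  have hmge : ∀ i, μ * f i ≤ m i := by
    intro i
    apply Finset.le_inf'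
    intro j _
    exact h2 j i
  have hsm0 : ∀ i, 0 ≤ s i * m i := fun i => mul_nonneg (hs i).le (hm0 i)
  have hχval : ∀ i, χ i = (s i * m i) ^ (1 / (q - 1)) := hχ
  have hsf : ∀ i, s i * f i = ξ i ^ (q - 1) := by
    intro i
    show s i * (ξ i ^ (q - 1) / s i) = _
    field_simp [(hs i).ne']
  have hχpow : ∀ i, χ i ^ (q - 1) = s i * m i := by
    intro i
    rw [hχval i, ← Real.rpow_mul (hsm0 i), one_div_mul_cancel hne, Real.rpow_one]
  refine ⟨?_, ?_, ?_⟩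
  · intro i
    have h1 : s i * m i ≤ ξ i ^ (q - 1) := by
      rw [← hsf i]
      exact mul_le_mul_of_nonneg_left (hmle i) (hs i).le
    calc χ i = (s i * m i) ^ (1 / (q - 1)) := hχval i
      _ ≤ (ξ i ^ (q - 1)) ^ (1 / (q - 1)) :=
          Real.rpow_le_rpow (hsm0 i) h1 he0
      _ = ξ i := by
          rw [← Real.rpow_mul (hξ i), mul_one_div_cancel hne, Real.rpow_one]
  · intro i
    have h1 : μ * ξ i ^ (q - 1) ≤ s i * m i := by
      calc μ * ξ i ^ (q - 1) = s i * (μ * f i) := by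
            rw [← hsf i]; ring
        _ ≤ s i * m i := mul_le_mul_of_nonneg_left (hmge i) (hs i).le
    calc μ ^ (1 / (q - 1)) * ξ i
        = (μ * ξ i ^ (q - 1)) ^ (1 / (q - 1)) := by
          rw [Real.mul_rpow hμ0.le (Real.rpow_nonneg (hξ i) _),
            ← Real.rpow_mul (hξ i), mul_one_div_cancel hne, Real.rpow_one]
      _ ≤ (s i * m i) ^ (1 / (q - 1)) :=
          Real.rpow_le_rpow (mul_nonneg hμ0.le (Real.rpow_nonneg (hξ i) _)) h1 he0
      _ = χ i := (hχval i).symm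
  · intro i j hij
    have hmm : m j ≤ m i := by
      apply Finset.le_inf'
      intro k hk
      refine Finset.inf'_le f (Finset.mem_filter.mpr ⟨Finset.mem_univ k, ?_⟩)
      exact le_trans hij (Finset.mem_filter.mp hk).2
    rw [hχpow i, hχpow j, mul_div_cancel_left₀ _ (hs i).ne',
      mul_div_cancel_left₀ _ (hs j).ne']
    exact hmm
end

section
/- Let q > 1 be a real number and set γ = q/(q-1). Let ι be a finite nonempty index set of (tied) machine groups, where group i has n i > 0 machines and speed s i > 0. Let Λ : ι → ℝ with Λ i ≥ 0 be current loads satisfying (Λ i)^(q-1) / s i = (Λ j)^(q-1) / s j for all i, j ∈ ι (i.e., the marginal values α are equal across the tied groups). Let p > 0 be the size of the current job and δ > 0 the fraction of the job being assigned, distributed in proportion to n i * (s i)^γ: group i receives x i = δ * n i * (s i)^γ / ∑_j n j * (s j)^γ, and its load becomes Λ' i = Λ i + x i * p / (n i * s i). Then the equality is preserved: (Λ' i)^(q-1) / s i = (Λ' j)^(q-1) / s j for all i, j ∈ ι. -/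
open Finset

theorem tied_groups_stay_tied {ι : Type*} [Fintype ι] [Nonempty ι]
    (q : ℝ) (hq : 1 < q) (γ : ℝ) (hγ : γ = q / (q - 1))
    (n s : ι → ℝ) (hn : ∀ i, 0 < n i) (hs : ∀ i, 0 < s i)
    (Λ : ι → ℝ) (hΛ : ∀ i, 0 ≤ Λ i)
    (htied : ∀ i j : ι, Λ i ^ (q - 1) / s i = Λ j ^ (q - 1) / s j)
    (p δ : ℝ) (hp : 0 < p) (hδ : 0 < δ)
    (x Λ' : ι → ℝ)
    (hx : ∀ i, x i = δ * n i * s i ^ γ / ∑ j, n j * s j ^ γ)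
    (hΛ' : ∀ i, Λ' i = Λ i + x i * p / (n i * s i)) :
    ∀ i j : ι, Λ' i ^ (q - 1) / s i = Λ' j ^ (q - 1) / s j := by
  obtain ⟨i₀⟩ := ‹Nonempty ι›
  have hq1 : q - 1 ≠ 0 := by linarith
  set c := Λ i₀ ^ (q - 1) / s i₀ with hc
  have hc0 : 0 ≤ c := div_nonneg (Real.rpow_nonneg (hΛ i₀) _) (hs i₀).le
  have hS : 0 < ∑ j, n j * s j ^ γ :=
    Finset.sum_pos (fun j _ => mul_pos (hn j) (Real.rpow_pos_of_pos (hs j) γ))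
      Finset.univ_nonempty
  set K := c ^ (q - 1)⁻¹ + δ * p / ∑ j, n j * s j ^ γ with hK
  have hK0 : 0 ≤ K :=
    add_nonneg (Real.rpow_nonneg hc0 _) (div_nonneg (mul_pos hδ hp).le hS.le)
  have hγ1 : γ - 1 = (q - 1)⁻¹ := by
    rw [hγ]; field_simp; ring
  have key : ∀ i, Λ' i = K * s i ^ (q - 1)⁻¹ := by
    intro i
    have h1 : Λ i ^ (q - 1) = c * s i := by
      rw [hc, ← htied i i₀, div_mul_cancel₀ _ (hs i).ne']
    have h2 : Λ i = c ^ (q - 1)⁻¹ * s i ^ (q - 1)⁻¹ := by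
      rw [← Real.mul_rpow hc0 (hs i).le, ← h1, Real.rpow_rpow_inv (hΛ i) hq1]
    have h3 : s i ^ γ / s i = s i ^ (q - 1)⁻¹ := by
      rw [← hγ1, Real.rpow_sub (hs i), Real.rpow_one]
    have h4 : x i * p / (n i * s i) = (δ * p / ∑ j, n j * s j ^ γ) * s i ^ (q - 1)⁻¹ := by
      rw [hx i, ← h3]
      field_simp [(hn i).ne', (hs i).ne', hS.ne']
    rw [hΛ' i, h2, h4, hK]
    ring
  intro i j
  have hfin : ∀ i, Λ' i ^ (q - 1) / s i = K ^ (q - 1) := by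
    intro i
    rw [key i, Real.mul_rpow hK0 (Real.rpow_nonneg (hs i).le _),
      Real.rpow_inv_rpow (hs i).le hq1, mul_div_assoc, div_self (hs i).ne', mul_one]
  rw [hfin i, hfin j]
end

section
/- Let ι be a finite index set of machine groups with weights w i > 0 and pairwise distinct speeds s i > 0, and let ψ, χ : ι → ℝ be load profiles with ψ i ≥ 0 and χ i ≥ 0 for all i. Assume the prefix condition: for every i ∈ ι, ∑_{j : s j ≥ s i} ψ j * w j * s j ≥ ∑_{j : s j ≥ s i} χ j * w j * s j. Suppose i₀ ∈ ι is the slowest group with ψ i₀ < χ i₀, i.e., ψ i₀ < χ i₀ and ψ j ≥ χ j for every j with s j < s i₀. Then there exists a group i' with s i' > s i₀ such that ψ i' > χ i' and, for every prefix P = {j : s j ≥ s k} (for some k ∈ ι) with i' ∈ P and i₀ ∉ P, the strict inequality ∑_{j ∈ P} ψ j * w j * s j > ∑_{j ∈ P} χ j * w j * s j holds. -/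
open Finset

theorem exists_overloaded_faster_group {ι : Type*} [Fintype ι]
    (w s : ι → ℝ) (hw : ∀ i, 0 < w i) (hs : ∀ i, 0 < s i)
    (hs_inj : Function.Injective s)
    (ψ χ : ι → ℝ) (hψ : ∀ i, 0 ≤ ψ i) (hχ : ∀ i, 0 ≤ χ i)
    (hpre : ∀ i : ι, ∑ j ∈ univ.filter (fun j => s i ≤ s j), ψ j * w j * s j ≥
        ∑ j ∈ univ.filter (fun j => s i ≤ s j), χ j * w j * s j)
    (i₀ : ι) (hi₀ : ψ i₀ < χ i₀)
    (hslowest : ∀ j, s j < s i₀ → χ j ≤ ψ j) :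
    ∃ i', s i₀ < s i' ∧ χ i' < ψ i' ∧
      ∀ k : ι, i' ∈ univ.filter (fun j => s k ≤ s j) →
        i₀ ∉ univ.filter (fun j => s k ≤ s j) →
        ∑ j ∈ univ.filter (fun j => s k ≤ s j), ψ j * w j * s j >
        ∑ j ∈ univ.filter (fun j => s k ≤ s j), χ j * w j * s j := by
  classical
  set D : ι → ℝ := fun j => (ψ j - χ j) * (w j * s j) with hD
  have hDsum : ∀ A : Finset ι, ∑ j ∈ A, D j =
      (∑ j ∈ A, ψ j * w j * s j) - ∑ j ∈ A, χ j * w j * s j := by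
    intro A
    rw [← Finset.sum_sub_distrib]
    exact Finset.sum_congr rfl fun j _ => by simp [hD]; ring
  have hDnn : ∀ i : ι, 0 ≤ ∑ j ∈ univ.filter (fun j => s i ≤ s j), D j := by
    intro i; rw [hDsum]; linarith [hpre i]
  have hDi₀ : D i₀ < 0 := by
    have h1 : 0 < w i₀ * s i₀ := mul_pos (hw i₀) (hs i₀)
    have : ψ i₀ - χ i₀ < 0 := by linarith
    exact mul_neg_of_neg_of_pos this h1
  set P₀ : Finset ι := univ.filter (fun j => s i₀ ≤ s j) with hP₀
  have hi₀P₀ : i₀ ∈ P₀ := by simp [hP₀]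
  set T : Finset ι := univ.filter (fun j => s i₀ < s j ∧ χ j < ψ j) with hT
  -- helper: any j ≠ i₀ with s j ≥ s i₀ has s i₀ < s j
  have hgt : ∀ j, j ≠ i₀ → s i₀ ≤ s j → s i₀ < s j := by
    intro j hj hle
    rcases lt_or_eq_of_le hle with h | h
    · exact h
    · exact absurd (hs_inj h.symm) hj
  have hTne : T.Nonempty := by
    by_contra h
    rw [Finset.not_nonempty_iff_eq_empty] at h
    have hall : ∀ j ∈ P₀.erase i₀, D j ≤ 0 := by
      intro j hj
      obtain ⟨hjne, hjP⟩ := Finset.mem_erase.mp hj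
      have hjle : s i₀ ≤ s j := by simpa [hP₀] using hjP
      have hjlt : s i₀ < s j := hgt j hjne hjle
      have : ¬ (χ j < ψ j) := by
        intro hc
        have : j ∈ T := by simp [hT, hjlt, hc]
        simp [h] at this
      have : ψ j - χ j ≤ 0 := by linarith [not_lt.mp this]
      exact mul_nonpos_of_nonpos_of_nonneg this (le_of_lt (mul_pos (hw j) (hs j)))
    have hsum : ∑ j ∈ P₀, D j = D i₀ + ∑ j ∈ P₀.erase i₀, D j :=
      (Finset.add_sum_erase P₀ D hi₀P₀).symm
    have : ∑ j ∈ P₀.erase i₀, D j ≤ 0 := Finset.sum_nonpos hall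
    have := hDnn i₀
    rw [← hP₀] at this
    linarith [hsum ▸ this]
  obtain ⟨i', hi'T, hmin⟩ := T.exists_min_image s hTne
  have hi'prop : s i₀ < s i' ∧ χ i' < ψ i' := by simpa [hT] using hi'T
  refine ⟨i', hi'prop.1, hi'prop.2, ?_⟩
  intro k hk1 hk2
  have hk1' : s k ≤ s i' := by simpa using hk1
  have hk2' : s i₀ < s k := by
    have : ¬ (s k ≤ s i₀) := by simpa using hk2
    exact lt_of_not_ge this
  set P : Finset ι := univ.filter (fun j => s k ≤ s j) with hP
  have hsub : P ⊆ P₀ := by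
    intro j hj
    have : s k ≤ s j := by simpa [hP] using hj
    simp [hP₀]; linarith
  have hi₀notP : i₀ ∉ P := by simp [hP]; linarith
  have hi₀mem : i₀ ∈ P₀ \ P := Finset.mem_sdiff.mpr ⟨hi₀P₀, hi₀notP⟩
  have hneg : ∑ j ∈ P₀ \ P, D j < 0 := by
    have hall : ∀ j ∈ (P₀ \ P).erase i₀, D j ≤ 0 := by
      intro j hj
      obtain ⟨hjne, hjP⟩ := Finset.mem_erase.mp hj
      obtain ⟨hjP₀, hjnP⟩ := Finset.mem_sdiff.mp hjP
      have hjle : s i₀ ≤ s j := by simpa [hP₀] using hjP₀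
      have hjlt : s i₀ < s j := hgt j hjne hjle
      have hjltk : s j < s k := by
        have : ¬ (s k ≤ s j) := by simpa [hP] using hjnP
        exact lt_of_not_ge this
      have : ¬ (χ j < ψ j) := by
        intro hc
        have hjT : j ∈ T := by simp [hT, hjlt, hc]
        have := hmin j hjT
        linarith
      have : ψ j - χ j ≤ 0 := by linarith [not_lt.mp this]
      exact mul_nonpos_of_nonpos_of_nonneg this (le_of_lt (mul_pos (hw j) (hs j)))
    have hsum : ∑ j ∈ P₀ \ P, D j = D i₀ + ∑ j ∈ (P₀ \ P).erase i₀, D j :=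
      (Finset.add_sum_erase _ D hi₀mem).symm
    have : ∑ j ∈ (P₀ \ P).erase i₀, D j ≤ 0 := Finset.sum_nonpos hall
    linarith [hsum]
  have hsplit : ∑ j ∈ P₀ \ P, D j + ∑ j ∈ P, D j = ∑ j ∈ P₀, D j :=
    Finset.sum_sdiff hsub
  have hP₀nn : 0 ≤ ∑ j ∈ P₀, D j := by
    have := hDnn i₀; rwa [← hP₀] at this
  have hPpos : 0 < ∑ j ∈ P, D j := by linarith
  rw [hDsum] at hPpos

  linarith
end
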